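/- In the diagonalization setting, fix an index j and a point β ∈ ℂ, and suppose the diagonal entry d_j has a pole of order t ≥ 1 at β (ord_β(d_j) = −t). Define the vector ψ_j := d_j⁻¹ • T_j over RatFunc ℂ. Then: (1) Q.mulVec ψ_j = Ŝ_j (the j-th column of S⁻¹, regarded over RatFunc ℂ); (2) Ŝ_j(β) ≠ 0; (3) every nonzero component of ψ_j has ord_β ≥ t; and (4) at least one component of ψ_j has ord_β exactly equal to t. Thus ψ_j is a pole cancellation function of Q at β of exact order t. -/

import Mathlib

set_option synthInstance.maxHeartbeats 1000000
set_option maxHeartbeats 1000000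

/-- `HasOrdAt α r k` : the rational function `r` has order `k ∈ ℤ` at `α`, i.e.
`r = (X − α)^k · (p/q)` with `p(α) ≠ 0` and `q(α) ≠ 0`. -/
def HasOrdAt (α : ℂ) (r : RatFunc ℂ) (k : ℤ) : Prop :=
  ∃ p q : Polynomial ℂ, Polynomial.eval α p ≠ 0 ∧ Polynomial.eval α q ≠ 0 ∧
    r = (RatFunc.X - RatFunc.C α) ^ k *
      (algebraMap (Polynomial ℂ) (RatFunc ℂ) p / algebraMap (Polynomial ℂ) (RatFunc ℂ) q)

/-- Entrywise embedding of a polynomial matrix into matrices over `RatFunc ℂ`. -/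
noncomputable def matRF {n : ℕ} (M : Matrix (Fin n) (Fin n) (Polynomial ℂ)) :
    Matrix (Fin n) (Fin n) (RatFunc ℂ) :=
  M.map (algebraMap (Polynomial ℂ) (RatFunc ℂ))

/-- The `i`-th column of a polynomial matrix, regarded over `RatFunc ℂ`. -/
noncomputable def colRF {n : ℕ} (M : Matrix (Fin n) (Fin n) (Polynomial ℂ)) (i : Fin n) :
    Fin n → RatFunc ℂ :=
  fun k => algebraMap (Polynomial ℂ) (RatFunc ℂ) (M k i)

/-- The `i`-th column of a polynomial matrix evaluated (entrywise) at `α`. -/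
def evalCol {n : ℕ} (M : Matrix (Fin n) (Fin n) (Polynomial ℂ)) (i : Fin n) (α : ℂ) :
    Fin n → ℂ :=
  fun k => Polynomial.eval α (M k i)


lemma myXsubC (β : ℂ) :
    algebraMap (Polynomial ℂ) (RatFunc ℂ) (Polynomial.X - Polynomial.C β)
      = RatFunc.X - RatFunc.C β := by
  simp [map_sub, RatFunc.algebraMap_X, RatFunc.algebraMap_C]

lemma hX_ne (β : ℂ) : (RatFunc.X - RatFunc.C β : RatFunc ℂ) ≠ 0 := by
  rw [← myXsubC]
  exact RatFunc.algebraMap_ne_zero (Polynomial.X_sub_C_ne_zero β)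

lemma HasOrdAt.mul {β : ℂ} {r s : RatFunc ℂ} {k m : ℤ}
    (hr : HasOrdAt β r k) (hs : HasOrdAt β s m) : HasOrdAt β (r * s) (k + m) := by
  obtain ⟨p, q, hp, hq, hr⟩ := hr
  obtain ⟨p', q', hp', hq', hs⟩ := hs
  refine ⟨p * p', q * q', by simp [hp, hp'], by simp [hq, hq'], ?_⟩
  rw [hr, hs, zpow_add₀ (hX_ne β), map_mul, map_mul]
  ring

lemma HasOrdAt.inv {β : ℂ} {r : RatFunc ℂ} {k : ℤ}
    (hr : HasOrdAt β r k) : HasOrdAt β r⁻¹ (-k) := by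
  obtain ⟨p, q, hp, hq, hr⟩ := hr
  exact ⟨q, p, hq, hp, by rw [hr, mul_inv, inv_div, ← zpow_neg]⟩

lemma hasOrdAt_algebraMap (β : ℂ) (p : Polynomial ℂ) (hp : p ≠ 0) :
    HasOrdAt β (algebraMap (Polynomial ℂ) (RatFunc ℂ) p) (p.rootMultiplicity β) := by
  refine ⟨p /ₘ (Polynomial.X - Polynomial.C β) ^ p.rootMultiplicity β, 1,
    Polynomial.eval_divByMonic_pow_rootMultiplicity_ne_zero β hp, by simp, ?_⟩
  rw [map_one, div_one]
  conv_lhs => rw [← Polynomial.pow_mul_divByMonic_rootMultiplicity_eq p β]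
  rw [map_mul, map_pow, zpow_natCast, myXsubC]

lemma evalCol_ne_zero {n : ℕ} (M : Matrix (Fin n) (Fin n) (Polynomial ℂ))
    (hM : IsUnit M.det) (j : Fin n) (β : ℂ) :
    (fun k => Polynomial.eval β (M k j)) ≠ 0 := by
  intro h
  have hdet : (M.map (Polynomial.evalRingHom β)).det = Polynomial.eval β M.det :=
    ((Polynomial.evalRingHom β).map_det M).symm
  have hz : (M.map (Polynomial.evalRingHom β)).det = 0 := by
    refine Matrix.det_eq_zero_of_column_eq_zero j (fun i => ?_)
    have := congrFun h i
    simpa [Matrix.map_apply] using this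
  obtain ⟨r, hr, hc⟩ := Polynomial.isUnit_iff.mp hM
  rw [hz] at hdet
  rw [← hc] at hdet
  simp at hdet
  exact hr.ne_zero hdet.symm

/-- In the diagonalization setting `D = S·Q·T`, if the diagonal entry
`d_j = D j j` has a pole of order `t ≥ 1` at `β` (i.e. `ord_β(d_j) = −t`), then for
`ψ_j := d_j⁻¹ • T_j` one has `Q.mulVec ψ_j = Ŝ_j` (the `j`-th column of `S⁻¹`),
`Ŝ_j(β) ≠ 0`, every nonzero component of `ψ_j` has order `≥ t` at `β`, and some
component has order exactly `t`: `ψ_j` is a pole cancellation function of `Q` at `β`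
of exact order `t`. -/
theorem pole_cancellation_function_of_Q_of_exact_order
    (n : ℕ) (hn : 1 ≤ n)
    (Q : Matrix (Fin n) (Fin n) (RatFunc ℂ)) (hQ : Q.det ≠ 0)
    (S T : Matrix (Fin n) (Fin n) (Polynomial ℂ))
    (hS : IsUnit S.det) (hT : IsUnit T.det)
    (D : Matrix (Fin n) (Fin n) (RatFunc ℂ))
    (hD : D = matRF S * Q * matRF T) (hdiag : D.IsDiag)
    (j : Fin n) (β : ℂ) (t : ℕ) (ht : 1 ≤ t)
    (hpole : HasOrdAt β (D j j) (-(t : ℤ))) :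
    Q.mulVec ((D j j)⁻¹ • colRF T j) = colRF (S⁻¹) j ∧
    evalCol (S⁻¹) j β ≠ 0 ∧
    (∀ k : Fin n, ((D j j)⁻¹ • colRF T j) k ≠ 0 →
      ∃ m : ℤ, HasOrdAt β (((D j j)⁻¹ • colRF T j) k) m ∧ (t : ℤ) ≤ m) ∧
    (∃ k : Fin n, HasOrdAt β (((D j j)⁻¹ • colRF T j) k) (t : ℤ)) := by
  have hdne : D j j ≠ 0 := by
    obtain ⟨p, q, hp, hq, h⟩ := hpole
    rw [h]
    exact mul_ne_zero (zpow_ne_zero _ (hX_ne β))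
      (div_ne_zero (RatFunc.algebraMap_ne_zero (fun h0 => hp (by simp [h0])))
        (RatFunc.algebraMap_ne_zero (fun h0 => hq (by simp [h0]))))
  have hdinv : HasOrdAt β (D j j)⁻¹ (t : ℤ) := by
    have := hpole.inv
    rwa [neg_neg] at this
  have hmm : ∀ (A B : Matrix (Fin n) (Fin n) (Polynomial ℂ)),
      matRF (A * B) = matRF A * matRF B := fun A B => Matrix.map_mul
  have hSR : IsUnit (matRF S).det := by
    have : (matRF S).det = algebraMap (Polynomial ℂ) (RatFunc ℂ) S.det :=
      ((algebraMap (Polynomial ℂ) (RatFunc ℂ)).map_det S).symm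
    rw [this]
    exact hS.map _
  have hSinv : matRF (S⁻¹) = (matRF S)⁻¹ := by
    refine (Matrix.inv_eq_right_inv ?_).symm
    rw [← hmm, Matrix.mul_nonsing_inv _ hS]
    simp [matRF]
  have part1 : Q.mulVec ((D j j)⁻¹ • colRF T j) = colRF (S⁻¹) j := by
    have hcolT : colRF T j = (matRF T).mulVec (Pi.single j 1) := by
      funext i
      simp [colRF, matRF, Matrix.mulVec_single, Matrix.map_apply]
    have hQT : Q * matRF T = (matRF S)⁻¹ * D := by
      rw [hD, ← Matrix.mul_assoc, ← Matrix.mul_assoc,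
        Matrix.nonsing_inv_mul _ hSR, Matrix.one_mul]
    have hDe : D.mulVec (Pi.single j 1) = D j j • (Pi.single j 1 : Fin n → RatFunc ℂ) := by
      funext i
      by_cases h : i = j
      · subst h; simp
      · simp [Matrix.mulVec_single, hdiag h, Pi.single_eq_of_ne h]
    rw [Matrix.mulVec_smul, hcolT, Matrix.mulVec_mulVec, hQT,
      ← Matrix.mulVec_mulVec, hDe, Matrix.mulVec_smul, smul_smul,
      inv_mul_cancel₀ hdne, one_smul, hSinv.symm]
    funext i
    simp [colRF, matRF, Matrix.mulVec_single, Matrix.map_apply]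
  refine ⟨part1, ?_, ?_, ?_⟩
  · have hSdet : IsUnit (S⁻¹).det := by
      have h1 : S⁻¹ * S = 1 := Matrix.nonsing_inv_mul _ hS
      have := congrArg Matrix.det h1
      rw [Matrix.det_mul, Matrix.det_one] at this
      exact IsUnit.of_mul_eq_one _ this
    exact evalCol_ne_zero (S⁻¹) hSdet j β
  · intro k hk
    have hTk : T k j ≠ 0 := by
      intro h0
      apply hk
      simp [colRF, h0]
    have := hdinv.mul (hasOrdAt_algebraMap β (T k j) hTk)
    refine ⟨(t : ℤ) + ((T k j).rootMultiplicity β : ℤ), ?_, by omega⟩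
    simpa [colRF, smul_eq_mul] using this
  · have hne := evalCol_ne_zero T hT j β
    obtain ⟨k, hk⟩ := Function.ne_iff.mp hne
    have hTk : T k j ≠ 0 := fun h0 => hk (by simp [h0])
    have hrm : (T k j).rootMultiplicity β = 0 :=
      Polynomial.rootMultiplicity_eq_zero (by simpa [Polynomial.IsRoot] using hk)
    have := hdinv.mul (hasOrdAt_algebraMap β (T k j) hTk)
    rw [hrm] at this
    refine ⟨k, ?_⟩
    simpa [colRF, smul_eq_mul] using this
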